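/- Consider the constraint functions g₁(x) := x₁, g₂(x) := x₁ + x₂x₁² + x₂³/3, g₃(x) := 2x₁ + x₂x₁² + x₂³/3 on ℝ². Then: (i) at x* = (0,0) the rank of {∇g₁(x*), ∇g₂(x*), ∇g₃(x*)} is 1, and at every x ∈ ℝ² the rank of {∇g₁(x), ∇g₂(x), ∇g₃(x)} is at most 2; (ii) for every x ≠ (0,0), every two-element subset of {∇g₁(x), ∇g₂(x), ∇g₃(x)} is linearly independent (has rank 2); in particular, for x ≠ (0,0) the three gradients cannot be separated into a subset of rank 1 and a complementary subset of rank equal to the rank at x*. This disproves Lemma 3.4 of Lu, Song and Zhang (2017). -/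

import Mathlib

open scoped BigOperators

attribute [local instance] Classical.propDecidable

noncomputable section

/-- The gradient vector of `φ` at `x` (the vector of partial derivatives). -/
def gradVec {n : ℕ} (φ : (Fin n → ℝ) → ℝ) (x : Fin n → ℝ) : Fin n → ℝ :=
  fun k => fderiv ℝ φ x (Pi.single k 1)

/-- The rank of a family of vectors: the dimension of its linear span. -/
def famRank {ι : Type*} {n : ℕ} (v : ι → (Fin n → ℝ)) : ℕ :=
  Module.finrank ℝ (Submodule.span ℝ (Set.range v))

/-- Constraints of the counter-example to Lemma 3.4 of Lu–Song–Zhang. -/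
def g14 : Fin 3 → (Fin 2 → ℝ) → ℝ :=
  ![fun x => x 0,
    fun x => x 0 + x 1 * (x 0) ^ 2 + (x 1) ^ 3 / 3,
    fun x => 2 * x 0 + x 1 * (x 0) ^ 2 + (x 1) ^ 3 / 3]

lemma grad0 (x : Fin 2 → ℝ) : gradVec (g14 0) x = ![1, 0] := by
  have h : HasFDerivAt (g14 0) (ContinuousLinearMap.proj 0 : (Fin 2 → ℝ) →L[ℝ] ℝ) x :=
    hasFDerivAt_apply (𝕜 := ℝ) (0 : Fin 2) x
  funext k
  rw [gradVec, h.fderiv]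
  fin_cases k <;> simp [Pi.single_apply]

lemma grad1 (x : Fin 2 → ℝ) :
    gradVec (g14 1) x = ![1 + 2 * x 0 * x 1, x 0 ^ 2 + x 1 ^ 2] := by
  set p0 : (Fin 2 → ℝ) →L[ℝ] ℝ := ContinuousLinearMap.proj 0 with hp0
  set p1 : (Fin 2 → ℝ) →L[ℝ] ℝ := ContinuousLinearMap.proj 1 with hp1
  have h0 : HasFDerivAt (fun y : Fin 2 → ℝ => y 0) p0 x := hasFDerivAt_apply (𝕜 := ℝ) (0 : Fin 2) x
  have h1 : HasFDerivAt (fun y : Fin 2 → ℝ => y 1) p1 x := hasFDerivAt_apply (𝕜 := ℝ) (1 : Fin 2) x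
  have hsq : HasFDerivAt (fun y : Fin 2 → ℝ => (y 0) ^ 2) (x 0 • p0 + x 0 • p0) x := by
    simpa [pow_two, Pi.mul_def] using h0.mul h0
  have hcube : HasFDerivAt (fun y : Fin 2 → ℝ => (y 1) ^ 3)
      ((x 1 * x 1) • p1 + x 1 • (x 1 • p1 + x 1 • p1)) x := by
    simpa [pow_succ, pow_zero, one_mul, Pi.mul_def] using (h1.mul h1).mul h1
  have hdiv : HasFDerivAt (fun y : Fin 2 → ℝ => (y 1) ^ 3 / 3)
      ((3:ℝ)⁻¹ • ((x 1 * x 1) • p1 + x 1 • (x 1 • p1 + x 1 • p1))) x := by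
    simpa [div_eq_inv_mul] using hcube.const_mul (3:ℝ)⁻¹
  have h : HasFDerivAt (g14 1) _ x := (h0.add (h1.mul hsq)).add hdiv
  funext k
  rw [gradVec, h.fderiv]
  fin_cases k <;> simp [hp0, hp1, Pi.single_apply] <;> ring

lemma grad2 (x : Fin 2 → ℝ) :
    gradVec (g14 2) x = ![2 + 2 * x 0 * x 1, x 0 ^ 2 + x 1 ^ 2] := by
  set p0 : (Fin 2 → ℝ) →L[ℝ] ℝ := ContinuousLinearMap.proj 0 with hp0
  set p1 : (Fin 2 → ℝ) →L[ℝ] ℝ := ContinuousLinearMap.proj 1 with hp1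
  have h0 : HasFDerivAt (fun y : Fin 2 → ℝ => y 0) p0 x := hasFDerivAt_apply (𝕜 := ℝ) (0 : Fin 2) x
  have h1 : HasFDerivAt (fun y : Fin 2 → ℝ => y 1) p1 x := hasFDerivAt_apply (𝕜 := ℝ) (1 : Fin 2) x
  have h0' : HasFDerivAt (fun y : Fin 2 → ℝ => 2 * y 0) ((2:ℝ) • p0) x := h0.const_mul 2
  have hsq : HasFDerivAt (fun y : Fin 2 → ℝ => (y 0) ^ 2) (x 0 • p0 + x 0 • p0) x := by
    simpa [pow_two, Pi.mul_def] using h0.mul h0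
  have hcube : HasFDerivAt (fun y : Fin 2 → ℝ => (y 1) ^ 3)
      ((x 1 * x 1) • p1 + x 1 • (x 1 • p1 + x 1 • p1)) x := by
    simpa [pow_succ, pow_zero, one_mul, Pi.mul_def] using (h1.mul h1).mul h1
  have hdiv : HasFDerivAt (fun y : Fin 2 → ℝ => (y 1) ^ 3 / 3)
      ((3:ℝ)⁻¹ • ((x 1 * x 1) • p1 + x 1 • (x 1 • p1 + x 1 • p1))) x := by
    simpa [div_eq_inv_mul] using hcube.const_mul (3:ℝ)⁻¹
  have h : HasFDerivAt (g14 2) _ x := (h0'.add (h1.mul hsq)).add hdiv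
  funext k
  rw [gradVec, h.fderiv]
  fin_cases k <;> simp [hp0, hp1, Pi.single_apply] <;> ring

lemma li2 {v w : Fin 2 → ℝ} (h : v 0 * w 1 - v 1 * w 0 ≠ 0) :
    LinearIndependent ℝ ![v, w] := by
  refine linearIndependent_fin2.2 ⟨?_, ?_⟩
  · intro hw
    apply h
    have h0 : w 0 = 0 := by rw [show w = ![v,w] 1 from rfl, hw]; rfl
    have h1 : w 1 = 0 := by rw [show w = ![v,w] 1 from rfl, hw]; rfl
    rw [h0, h1]; ring
  · intro a ha
    apply h
    have h0 := congrFun ha 0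
    have h1 := congrFun ha 1
    simp only [Matrix.cons_val_one, Matrix.head_cons, Matrix.cons_val_zero,
      Pi.smul_apply, smul_eq_mul] at h0 h1
    linear_combination h1 * w 0 - h0 * w 1

lemma rank_ge_two {ι : Type*} (v : ι → (Fin 2 → ℝ)) (i j : ι)
    (h : LinearIndependent ℝ ![v i, v j]) : 2 ≤ famRank v := by
  have hle : Submodule.span ℝ (Set.range ![v i, v j]) ≤ Submodule.span ℝ (Set.range v) := by
    apply Submodule.span_mono
    rintro y ⟨k, rfl⟩
    fin_cases k
    · exact ⟨i, rfl⟩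
    · exact ⟨j, rfl⟩
  have h2 : Module.finrank ℝ (Submodule.span ℝ (Set.range ![v i, v j])) = 2 := by
    rw [finrank_span_eq_card h]; simp
  calc (2:ℕ) = _ := h2.symm
    _ ≤ famRank v := Submodule.finrank_mono hle

lemma pos_of_ne (x : Fin 2 → ℝ) (hx : x ≠ 0) : 0 < x 0 ^ 2 + x 1 ^ 2 := by
  have hk' : x 0 ≠ 0 ∨ x 1 ≠ 0 := by
    rcases Function.ne_iff.1 hx with ⟨k, hk⟩
    simp only [Pi.zero_apply] at hk
    fin_cases k
    · exact Or.inl hk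
    · exact Or.inr hk
  rcases hk' with hk | hk <;>
    nlinarith [sq_nonneg (x 0), sq_nonneg (x 1), mul_self_pos.2 hk]

/-- the gradients of `g14` have rank 1 at the origin and rank at most 2
everywhere; away from the origin every two of the three gradients are linearly independent,
so the gradients cannot be split into a subset of rank 1 and a complementary subset whose
rank equals the rank at the origin. -/
theorem stmt14 :
    (famRank (fun i : Fin 3 => gradVec (g14 i) (0 : Fin 2 → ℝ)) = 1 ∧
      ∀ x : Fin 2 → ℝ, famRank (fun i : Fin 3 => gradVec (g14 i) x) ≤ 2) ∧
    (∀ x : Fin 2 → ℝ, x ≠ 0 → ∀ i j : Fin 3, i ≠ j →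
      LinearIndependent ℝ ![gradVec (g14 i) x, gradVec (g14 j) x]) ∧
    (∀ x : Fin 2 → ℝ, x ≠ 0 → ¬ ∃ E : Set (Fin 3),
      famRank (fun j : E => gradVec (g14 j.1) x) = 1 ∧
      famRank (fun j : ↥(Eᶜ) => gradVec (g14 j.1) x) =
        famRank (fun i : Fin 3 => gradVec (g14 i) (0 : Fin 2 → ℝ))) := by
  -- rank at the origin is 1
  have hrank0 : famRank (fun i : Fin 3 => gradVec (g14 i) (0 : Fin 2 → ℝ)) = 1 := by
    have hspan : Submodule.span ℝ (Set.range (fun i : Fin 3 => gradVec (g14 i) (0 : Fin 2 → ℝ)))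
        = ℝ ∙ (![1, 0] : Fin 2 → ℝ) := by
      apply le_antisymm
      · rw [Submodule.span_le]
        rintro y ⟨i, rfl⟩
        fin_cases i
        · rw [SetLike.mem_coe, Submodule.mem_span_singleton]
          refine ⟨1, ?_⟩
          show (1:ℝ) • ![1, 0] = gradVec (g14 0) 0
          rw [grad0]; simp
        · rw [SetLike.mem_coe, Submodule.mem_span_singleton]
          refine ⟨1, ?_⟩
          show (1:ℝ) • ![1, 0] = gradVec (g14 1) 0
          rw [grad1]; funext k; fin_cases k <;> simp
        · rw [SetLike.mem_coe, Submodule.mem_span_singleton]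
          refine ⟨2, ?_⟩
          show (2:ℝ) • ![1, 0] = gradVec (g14 2) 0
          rw [grad2]; funext k; fin_cases k <;> simp
      · rw [Submodule.span_singleton_le_iff_mem]
        exact Submodule.subset_span ⟨0, grad0 0⟩
    rw [famRank, hspan, finrank_span_singleton]
    intro h
    have := congrFun h 0
    norm_num at this
  -- determinant facts and pairwise independence
  have hpair : ∀ x : Fin 2 → ℝ, x ≠ 0 → ∀ i j : Fin 3, i ≠ j →
      LinearIndependent ℝ ![gradVec (g14 i) x, gradVec (g14 j) x] := by
    intro x hx i j hij
    have hpos := pos_of_ne x hx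
    fin_cases i <;> fin_cases j
    · exact absurd rfl hij
    · apply li2
      show gradVec (g14 0) x 0 * gradVec (g14 1) x 1 -
        gradVec (g14 0) x 1 * gradVec (g14 1) x 0 ≠ 0
      rw [grad0, grad1]; intro hcon
      simp only [Matrix.cons_val_zero, Matrix.cons_val_one, Matrix.head_cons] at hcon
      nlinarith [hpos]
    · apply li2
      show gradVec (g14 0) x 0 * gradVec (g14 2) x 1 -
        gradVec (g14 0) x 1 * gradVec (g14 2) x 0 ≠ 0
      rw [grad0, grad2]; intro hcon
      simp only [Matrix.cons_val_zero, Matrix.cons_val_one, Matrix.head_cons] at hcon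
      nlinarith [hpos]
    · apply li2
      show gradVec (g14 1) x 0 * gradVec (g14 0) x 1 -
        gradVec (g14 1) x 1 * gradVec (g14 0) x 0 ≠ 0
      rw [grad0, grad1]; intro hcon
      simp only [Matrix.cons_val_zero, Matrix.cons_val_one, Matrix.head_cons] at hcon
      nlinarith [hpos]
    · exact absurd rfl hij
    · apply li2
      show gradVec (g14 1) x 0 * gradVec (g14 2) x 1 -
        gradVec (g14 1) x 1 * gradVec (g14 2) x 0 ≠ 0
      rw [grad1, grad2]; intro hcon
      simp only [Matrix.cons_val_zero, Matrix.cons_val_one, Matrix.head_cons] at hcon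
      nlinarith [hpos]
    · apply li2
      show gradVec (g14 2) x 0 * gradVec (g14 0) x 1 -
        gradVec (g14 2) x 1 * gradVec (g14 0) x 0 ≠ 0
      rw [grad0, grad2]; intro hcon
      simp only [Matrix.cons_val_zero, Matrix.cons_val_one, Matrix.head_cons] at hcon
      nlinarith [hpos]
    · apply li2
      show gradVec (g14 2) x 0 * gradVec (g14 1) x 1 -
        gradVec (g14 2) x 1 * gradVec (g14 1) x 0 ≠ 0
      rw [grad1, grad2]; intro hcon
      simp only [Matrix.cons_val_zero, Matrix.cons_val_one, Matrix.head_cons] at hcon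
      nlinarith [hpos]
    · exact absurd rfl hij
  refine ⟨⟨hrank0, ?_⟩, hpair, ?_⟩
  · intro x
    have h1 : famRank (fun i : Fin 3 => gradVec (g14 i) x)
        ≤ Module.finrank ℝ (Fin 2 → ℝ) := Submodule.finrank_le _
    simpa using h1
  · rintro x hx ⟨E, hE1, hE2⟩
    rw [hrank0] at hE2
    -- helper: a side containing two distinct indices has rank ≥ 2
    have key : ∀ (S : Set (Fin 3)) (i j : Fin 3), i ∈ S → j ∈ S → i ≠ j →
        ¬ famRank (fun k : S => gradVec (g14 k.1) x) = 1 := by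
      intro S i j hi hj hij hone
      have h2 : 2 ≤ famRank (fun k : S => gradVec (g14 k.1) x) :=
        rank_ge_two _ (⟨i, hi⟩ : S) (⟨j, hj⟩ : S) (hpair x hx i j hij)
      omega
    by_cases h0 : (0 : Fin 3) ∈ E <;> by_cases h1 : (1 : Fin 3) ∈ E <;>
      by_cases h2 : (2 : Fin 3) ∈ E
    · exact key E 0 1 h0 h1 (by decide) hE1
    · exact key E 0 1 h0 h1 (by decide) hE1
    · exact key E 0 2 h0 h2 (by decide) hE1
    · exact key Eᶜ 1 2 h1 h2 (by decide) hE2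
    · exact key E 1 2 h1 h2 (by decide) hE1
    · exact key Eᶜ 0 2 h0 h2 (by decide) hE2
    · exact key Eᶜ 0 1 h0 h1 (by decide) hE2
    · exact key Eᶜ 0 1 h0 h1 (by decide) hE2
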